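/- Let F, F⁰ : ℝ → ℂ be measurable, bounded on compact sets, vanishing on (−∞,0), with R(t) := F(t) − F⁰(t) → 0 as t → ∞ and R bounded on [0,∞). Let Z : ℝ → ℂ be continuous with |Z(β)| ≤ C e^{−q|β|}, q > 0. Then for any fixed b > 0, sup_{0 < ρ ≤ b} | ∫_{−arcosh(t/ρ)}^{arcosh(t/ρ)} Z(β) R(t − ρ cosh β) dβ | → 0 as t → ∞. -/

import Mathlib

open MeasureTheory Filter Complex

noncomputable def acosh (x : ℝ) : ℝ := Real.log (x + Real.sqrt (x ^ 2 - 1))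

lemma integrable_exp_neg_mul_abs' {a : ℝ} (ha : 0 < a) :
    Integrable (fun x : ℝ => Real.exp (-a * |x|)) := by
  have hf : IntegrableOn (fun x : ℝ => Real.exp (-a * |x|)) (Set.Ioi 0) := by
    refine (exp_neg_integrableOn_Ioi 0 ha).congr_fun ?_ measurableSet_Ioi
    intro x hx
    simp [abs_of_pos (Set.mem_Ioi.mp hx)]
  have int_Iic : IntegrableOn (fun x : ℝ ↦ Real.exp (-a * |x|)) (Set.Iic 0) := by
    rw [← Measure.map_neg_eq_self (volume : Measure ℝ)]
    have m : MeasurableEmbedding fun x : ℝ => -x := (Homeomorph.neg ℝ).measurableEmbedding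
    rw [m.integrableOn_map_iff]
    simp_rw [Function.comp_def, abs_neg, Set.neg_preimage, Set.neg_Iic, neg_zero]
    exact Iff.mpr integrableOn_Ici_iff_integrableOn_Ioi hf
  rw [← integrableOn_univ, ← Set.Iic_union_Ioi (a := (0:ℝ))]
  exact int_Iic.union hf

theorem stmt8 (F F₀ : ℝ → ℂ) (hFmeas : Measurable F) (hF₀meas : Measurable F₀)
    (hFloc : ∀ K : Set ℝ, IsCompact K → ∃ M : ℝ, ∀ s ∈ K, ‖F s‖ ≤ M)
    (hF₀loc : ∀ K : Set ℝ, IsCompact K → ∃ M : ℝ, ∀ s ∈ K, ‖F₀ s‖ ≤ M)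
    (hF0 : ∀ s : ℝ, s < 0 → F s = 0) (hF₀0 : ∀ s : ℝ, s < 0 → F₀ s = 0)
    (hRlim : Tendsto (fun t : ℝ => F t - F₀ t) atTop (nhds 0))
    (MR : ℝ) (hRbd : ∀ t : ℝ, 0 ≤ t → ‖F t - F₀ t‖ ≤ MR)
    (Z : ℝ → ℂ) (hZc : Continuous Z)
    (C q : ℝ) (hC : 0 < C) (hq : 0 < q)
    (hZ : ∀ β : ℝ, ‖Z β‖ ≤ C * Real.exp (-q * |β|))
    (b : ℝ) (hb : 0 < b) :
    ∀ ε : ℝ, 0 < ε → ∃ T : ℝ, ∀ t : ℝ, T ≤ t → ∀ ρ : ℝ, 0 < ρ → ρ ≤ b →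
      ‖∫ β in (-(acosh (t / ρ)))..(acosh (t / ρ)),
          Z β * (F (t - ρ * Real.cosh β) - F₀ (t - ρ * Real.cosh β))‖ < ε := by
  intro ε hε
  have hMR0 : 0 ≤ MR := le_trans (norm_nonneg _) (hRbd 0 le_rfl)
  have hRall : ∀ s : ℝ, ‖F s - F₀ s‖ ≤ MR := by
    intro s
    rcases lt_or_ge s 0 with hs | hs
    · rw [hF0 s hs, hF₀0 s hs, sub_zero, norm_zero]; exact hMR0
    · exact hRbd s hs
  -- the two reference integrals
  obtain ⟨J₁, hJ₁def⟩ : ∃ J : ℝ, J = ∫ x : ℝ, Real.exp (-q * |x|) := ⟨_, rfl⟩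
  obtain ⟨J₂, hJ₂def⟩ : ∃ J : ℝ, J = ∫ x : ℝ, Real.exp (-(q/2) * |x|) := ⟨_, rfl⟩
  have hJ₁ : 0 ≤ J₁ := hJ₁def ▸ integral_nonneg fun x => (Real.exp_pos _).le
  have hJ₂ : 0 ≤ J₂ := hJ₂def ▸ integral_nonneg fun x => (Real.exp_pos _).le
  have hq2 : 0 < q / 2 := by linarith
  -- choose δ
  obtain ⟨δ, hδdef⟩ : ∃ d : ℝ, d = ε / (2 * C * (J₁ + 1)) := ⟨_, rfl⟩
  have hδpos : 0 < δ := by rw [hδdef]; positivity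
  -- choose B
  obtain ⟨K, hKdef⟩ : ∃ k : ℝ, k = C * MR * J₂ + ε := ⟨_, rfl⟩
  have hK0 : 0 < K := by rw [hKdef]; positivity
  have hKε : ε ≤ K := by rw [hKdef]; nlinarith [mul_nonneg (mul_nonneg hC.le hMR0) hJ₂]
  obtain ⟨B, hBdef⟩ : ∃ b : ℝ, b = (2 / q) * Real.log (4 * K / ε) := ⟨_, rfl⟩
  have h4K : (1 : ℝ) < 4 * K / ε := by
    rw [lt_div_iff₀ hε]; nlinarith
  have hB0 : 0 ≤ B := by
    have := Real.log_pos h4K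
    rw [hBdef]; positivity
  have hBexp : Real.exp (-(q/2) * B) = ε / (4 * K) := by
    have harg : -(q/2) * B = -Real.log (4 * K / ε) := by
      rw [hBdef]; field_simp
    rw [harg, Real.exp_neg, Real.exp_log (by linarith), inv_div]
  -- choose S from the limit
  have hev : ∀ᶠ s in atTop, ‖F s - F₀ s‖ < δ := by
    have := hRlim.eventually (Metric.ball_mem_nhds (0 : ℂ) hδpos)
    filter_upwards [this] with s hs
    simpa [dist_eq_norm] using hs
  obtain ⟨S, hS⟩ := eventually_atTop.mp hev
  refine ⟨max S 0 + b * Real.cosh B, ?_⟩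
  intro t ht ρ hρ hρb
  -- the dominating function
  set g : ℝ → ℝ := fun β =>
    C * δ * Real.exp (-q * |β|) + C * MR * Real.exp (-(q/2) * B) * Real.exp (-(q/2) * |β|)
    with hgdef
  have hg_int : Integrable g :=
    ((integrable_exp_neg_mul_abs' hq).const_mul (C * δ)).add
      ((integrable_exp_neg_mul_abs' hq2).const_mul (C * MR * Real.exp (-(q/2) * B)))
  have hg_nonneg : ∀ β : ℝ, 0 ≤ g β := by
    intro β; rw [hgdef]; positivity
  -- pointwise bound
  have hpt : ∀ β : ℝ,
      ‖Z β * (F (t - ρ * Real.cosh β) - F₀ (t - ρ * Real.cosh β))‖ ≤ g β := by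
    intro β
    rw [norm_mul]
    rcases le_or_gt (|β|) B with hβ | hβ
    · -- small β : the argument is large, R is small there
      have hcosh : Real.cosh β ≤ Real.cosh B := by
        rw [Real.cosh_le_cosh]
        rwa [_root_.abs_of_nonneg hB0]
      have hmul : ρ * Real.cosh β ≤ b * Real.cosh B :=
        mul_le_mul hρb hcosh (Real.cosh_pos (x := β)).le hb.le
      have hargS : S ≤ t - ρ * Real.cosh β := by
        have : max S 0 ≤ t - b * Real.cosh B := by linarith
        calc S ≤ max S 0 := le_max_left _ _
          _ ≤ t - b * Real.cosh B := this
          _ ≤ t - ρ * Real.cosh β := by linarith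
      have hRs : ‖F (t - ρ * Real.cosh β) - F₀ (t - ρ * Real.cosh β)‖ ≤ δ :=
        (hS _ hargS).le
      have h1 : ‖Z β‖ * ‖F (t - ρ * Real.cosh β) - F₀ (t - ρ * Real.cosh β)‖
          ≤ C * Real.exp (-q * |β|) * δ :=
        mul_le_mul (hZ β) hRs (norm_nonneg _) (by positivity)
      calc ‖Z β‖ * ‖F (t - ρ * Real.cosh β) - F₀ (t - ρ * Real.cosh β)‖
          ≤ C * Real.exp (-q * |β|) * δ := h1
        _ = C * δ * Real.exp (-q * |β|) := by ring
        _ ≤ g β := by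
            rw [hgdef]
            have : (0:ℝ) ≤ C * MR * Real.exp (-(q/2) * B) * Real.exp (-(q/2) * |β|) := by
              positivity
            linarith
    · -- large β : exponential tail is small
      have h1 : ‖Z β‖ * ‖F (t - ρ * Real.cosh β) - F₀ (t - ρ * Real.cosh β)‖
          ≤ C * Real.exp (-q * |β|) * MR :=
        mul_le_mul (hZ β) (hRall _) (norm_nonneg _) (by positivity)
      have h2 : C * Real.exp (-q * |β|) * MR
          ≤ C * MR * Real.exp (-(q/2) * B) * Real.exp (-(q/2) * |β|) := by
        have hsplit : Real.exp (-q * |β|)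
            = Real.exp (-(q/2) * |β|) * Real.exp (-(q/2) * |β|) := by
          rw [← Real.exp_add]; congr 1; ring
        have hexp : Real.exp (-(q/2) * |β|) ≤ Real.exp (-(q/2) * B) := by
          apply Real.exp_le_exp.mpr
          nlinarith
        rw [hsplit]
        have hnn : (0:ℝ) ≤ C * MR * Real.exp (-(q/2) * |β|) := by positivity
        calc C * (Real.exp (-(q/2) * |β|) * Real.exp (-(q/2) * |β|)) * MR
            = (C * MR * Real.exp (-(q/2) * |β|)) * Real.exp (-(q/2) * |β|) := by ring
          _ ≤ (C * MR * Real.exp (-(q/2) * |β|)) * Real.exp (-(q/2) * B) :=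
              mul_le_mul_of_nonneg_left hexp hnn
          _ = C * MR * Real.exp (-(q/2) * B) * Real.exp (-(q/2) * |β|) := by ring
      calc ‖Z β‖ * ‖F (t - ρ * Real.cosh β) - F₀ (t - ρ * Real.cosh β)‖
          ≤ C * Real.exp (-q * |β|) * MR := h1
        _ ≤ C * MR * Real.exp (-(q/2) * B) * Real.exp (-(q/2) * |β|) := h2
        _ ≤ g β := by
            rw [hgdef]
            have : (0:ℝ) ≤ C * δ * Real.exp (-q * |β|) := by positivity
            linarith
  -- put everything together
  set A : ℝ := acosh (t / ρ) with hAdef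
  have hbound : ‖∫ β in (-A)..A,
      Z β * (F (t - ρ * Real.cosh β) - F₀ (t - ρ * Real.cosh β))‖
      ≤ |∫ β in (-A)..A, g β| :=
    intervalIntegral.norm_integral_le_abs_of_norm_le
      (Filter.Eventually.of_forall fun β => hpt β) hg_int.intervalIntegrable
  have habs : |∫ β in (-A)..A, g β| ≤ ∫ β : ℝ, g β := by
    rw [intervalIntegral.abs_intervalIntegral_eq]
    rw [_root_.abs_of_nonneg (setIntegral_nonneg measurableSet_uIoc fun x _ => hg_nonneg x)]
    exact setIntegral_le_integral hg_int (Filter.Eventually.of_forall hg_nonneg)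
  have hgint_val : ∫ β : ℝ, g β
      = C * δ * J₁ + C * MR * Real.exp (-(q/2) * B) * J₂ := by
    rw [hgdef]
    rw [integral_add (((integrable_exp_neg_mul_abs' hq).const_mul (C * δ)))
      ((integrable_exp_neg_mul_abs' hq2).const_mul (C * MR * Real.exp (-(q/2) * B)))]
    rw [integral_const_mul, integral_const_mul, hJ₁def, hJ₂def]
  have hterm1 : C * δ * J₁ < ε / 2 := by
    have heq : C * δ * J₁ = ε / 2 * (J₁ / (J₁ + 1)) := by
      rw [hδdef]; field_simp
    rw [heq]
    have : J₁ / (J₁ + 1) < 1 := (div_lt_one (by linarith)).mpr (by linarith)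
    nlinarith
  have hterm2 : C * MR * Real.exp (-(q/2) * B) * J₂ ≤ ε / 4 := by
    rw [hBexp]
    have h1 : C * MR * (ε / (4 * K)) * J₂ = (C * MR * J₂) * (ε / (4 * K)) := by ring
    rw [h1]
    have h2 : C * MR * J₂ ≤ K := by rw [hKdef]; linarith
    have h3 : (C * MR * J₂) * (ε / (4 * K)) ≤ K * (ε / (4 * K)) :=
      mul_le_mul_of_nonneg_right h2 (by positivity)
    have h4 : K * (ε / (4 * K)) = ε / 4 := by field_simp
    linarith
  calc ‖∫ β in (-A)..A,
      Z β * (F (t - ρ * Real.cosh β) - F₀ (t - ρ * Real.cosh β))‖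
      ≤ |∫ β in (-A)..A, g β| := hbound
    _ ≤ ∫ β : ℝ, g β := habs
    _ = C * δ * J₁ + C * MR * Real.exp (-(q/2) * B) * J₂ := hgint_val
    _ < ε := by linarith
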